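/- Let n ≥ 1, let p be an integer with 1 ≤ p ≤ n, let A and D be n×n real matrices, and define L(i,j) := ⊕_p(l ↦ A(i,l) + D(l,j)) and U(i,j) := ⊕_p(l ↦ A(i,l) − D(j,l)). Assume that every vector z ∈ ℝⁿ satisfying (A ⊗_p z)_i = λ + z_i for all i (for some λ ∈ ℝ) lies in Zone(D), and that for each row i there exists j with A(i,j) = L(i,j) = U(i,j). Then for any x, y ∈ ℝⁿ and λ ∈ ℝ with (A ⊗_p x) = λ + x and (A ⊗_p y) = λ + y (componentwise), and any α, β ∈ ℝ, the vectors w and v defined by w_i = max(α + x_i, β + y_i) and v_i = min(α + x_i, β + y_i) satisfy (A ⊗_p w) = λ + w and (A ⊗_p v) = λ + v. -/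

import Mathlib

/-- The maxmin-`p` value of `s : Fin n → ℝ`: the `p`-th smallest element (1-indexed) of the
multiset `{s 0, …, s (n-1)}`, counted with multiplicity. -/
noncomputable def maxmin {n : ℕ} (p : ℕ) (s : Fin n → ℝ) : ℝ :=
  (Multiset.sort (Multiset.map s (Finset.univ : Finset (Fin n)).val) (· ≤ ·)).getD (p - 1) 0


/-- In a sorted list, if at least `k+1` elements are `≤ v`, then the `k`-th element is `≤ v`. -/
lemma sorted_getElem_le {l : List ℝ} (hs : l.Pairwise (· ≤ ·)) {k : ℕ} (hk : k < l.length)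
    {v : ℝ} (hc : k < l.countP (fun a => decide (a ≤ v))) : l[k] ≤ v := by
  by_contra hlt
  push_neg at hlt
  have hdrop : l.countP (fun a => decide (a ≤ v)) =
      (l.take k).countP (fun a => decide (a ≤ v)) := by
    conv_lhs => rw [← List.take_append_drop k l]
    rw [List.countP_append]
    have h0 : (l.drop k).countP (fun a => decide (a ≤ v)) = 0 := by
      rw [List.countP_eq_zero]
      intro a ha
      rcases List.mem_iff_getElem.1 ha with ⟨i, hi, rfl⟩
      rw [List.getElem_drop]
      simp only [decide_eq_true_eq, not_le]
      have hki : k + i < l.length := by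
        have := hi; rw [List.length_drop] at this; omega
      have : l[k] ≤ l[k + i] := by
        rcases Nat.eq_or_lt_of_le (Nat.le_add_right k i) with h | h
        · simp [← h]
        · exact (List.pairwise_iff_getElem.1 hs) k (k + i) hk hki h
      linarith
    omega
  have hle : (l.take k).countP (fun a => decide (a ≤ v)) ≤ k := by
    calc (l.take k).countP (fun a => decide (a ≤ v)) ≤ (l.take k).length :=
          List.countP_le_length
      _ ≤ k := by rw [List.length_take]; omega
  omega

/-- In a sorted list, at least `k+1` elements are `≤` the `k`-th element. -/
lemma lt_countP_sorted {l : List ℝ} (hs : l.Pairwise (· ≤ ·)) {k : ℕ} (hk : k < l.length) :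
    k < l.countP (fun a => decide (a ≤ l[k])) := by
  have hmain : ∀ v : ℝ, l[k] ≤ v → k < l.countP (fun a => decide (a ≤ v)) := by
    intro v hv
    have htake : (l.take (k + 1)).countP (fun a => decide (a ≤ v)) = k + 1 := by
      have hall : ∀ a ∈ l.take (k + 1), decide (a ≤ v) = true := by
        intro a ha
        rcases List.mem_iff_getElem.1 ha with ⟨i, hi, rfl⟩
        rw [List.getElem_take]
        have hil : i < l.length := by
          have := hi; rw [List.length_take] at this; omega
        have hik : i ≤ k := by
          have := hi; rw [List.length_take] at this; omega
        simp only [decide_eq_true_eq]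
        rcases Nat.eq_or_lt_of_le hik with h | h
        · simpa [h] using hv
        · exact le_trans ((List.pairwise_iff_getElem.1 hs) i k hil hk h) hv
      rw [List.countP_eq_length.2 hall, List.length_take]
      omega
    have hsplit : l.countP (fun a => decide (a ≤ v)) =
        (l.take (k+1)).countP (fun a => decide (a ≤ v)) +
        (l.drop (k+1)).countP (fun a => decide (a ≤ v)) := by
      conv_lhs => rw [← List.take_append_drop (k+1) l, List.countP_append]
    omega
  exact hmain l[k] le_rfl

lemma maxmin_length {n : ℕ} (s : Fin n → ℝ) :
    (Multiset.sort (Multiset.map s (Finset.univ : Finset (Fin n)).val) (· ≤ ·)).length = n := by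
  rw [Multiset.length_sort, Multiset.card_map]
  simp

lemma list_countP_eq_multiset {n : ℕ} (s : Fin n → ℝ) (v : ℝ) :
    (Multiset.sort (Multiset.map s (Finset.univ : Finset (Fin n)).val) (· ≤ ·)).countP
      (fun a => decide (a ≤ v)) =
    Multiset.card (Multiset.filter (fun j => s j ≤ v) (Finset.univ : Finset (Fin n)).val) := by
  have : ((Multiset.sort (Multiset.map s (Finset.univ : Finset (Fin n)).val) (· ≤ ·)) :
      Multiset ℝ).countP (fun a => a ≤ v) =
      Multiset.countP (fun a => a ≤ v) (Multiset.map s (Finset.univ : Finset (Fin n)).val) := by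
    rw [Multiset.sort_eq]
  rw [Multiset.countP_map] at this
  rw [← this]
  rfl

/-- `maxmin` is monotone. -/
lemma maxmin_mono {n p : ℕ} (hp1 : 1 ≤ p) (hpn : p ≤ n) {s t : Fin n → ℝ}
    (h : ∀ j, s j ≤ t j) : maxmin p s ≤ maxmin p t := by
  have hk : p - 1 < n := by omega
  unfold maxmin
  rw [List.getD_eq_getElem _ 0 (by rw [maxmin_length]; omega),
      List.getD_eq_getElem _ 0 (by rw [maxmin_length]; omega)]
  apply sorted_getElem_le (Multiset.pairwise_sort _ _)
  have hct := lt_countP_sorted (l := Multiset.sort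
      (Multiset.map t (Finset.univ : Finset (Fin n)).val) (· ≤ ·)) (Multiset.pairwise_sort _ _)
      (k := p - 1) (by rw [maxmin_length]; omega)
  set v := (Multiset.sort (Multiset.map t (Finset.univ : Finset (Fin n)).val) (· ≤ ·))[p-1]'
      (by rw [maxmin_length]; omega) with hv
  rw [list_countP_eq_multiset] at hct
  rw [list_countP_eq_multiset]
  have hmono : Multiset.card (Multiset.filter (fun j => t j ≤ v)
        (Finset.univ : Finset (Fin n)).val) ≤
      Multiset.card (Multiset.filter (fun j => s j ≤ v)
        (Finset.univ : Finset (Fin n)).val) :=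
    Multiset.card_le_card (Multiset.monotone_filter_right _
      (fun j hj => le_trans (h j) hj))
  omega

/-- `maxmin` is translation-equivariant. -/
lemma maxmin_add_const {n p : ℕ} (hp1 : 1 ≤ p) (hpn : p ≤ n) (s : Fin n → ℝ) (c : ℝ) :
    maxmin p (fun j => s j + c) = maxmin p s + c := by
  have hk : p - 1 < n := by omega
  unfold maxmin
  have hmap : Multiset.map (fun j => s j + c) (Finset.univ : Finset (Fin n)).val =
      Multiset.map (· + c) (Multiset.map s (Finset.univ : Finset (Fin n)).val) := by
    rw [Multiset.map_map]; rfl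
  have hsort : Multiset.sort (Multiset.map (fun j => s j + c)
        (Finset.univ : Finset (Fin n)).val) (· ≤ ·) =
      (Multiset.sort (Multiset.map s (Finset.univ : Finset (Fin n)).val) (· ≤ ·)).map (· + c) := by
    apply (fun hp h1 h2 => List.Perm.eq_of_pairwise' (r := (· ≤ · : ℝ → ℝ → Prop)) h1 h2 hp)
    · apply Multiset.coe_eq_coe.1
      rw [Multiset.sort_eq, hmap, ← Multiset.map_coe, Multiset.sort_eq]
    · exact Multiset.pairwise_sort _ _
    · exact List.Pairwise.map _ (fun a b hab => add_le_add_left hab c) (Multiset.pairwise_sort _ _)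
  rw [hsort]
  rw [List.getD_eq_getElem _ 0 (by rw [List.length_map, maxmin_length]; omega),
      List.getD_eq_getElem _ 0 (by rw [maxmin_length]; omega),
      List.getElem_map]

/-- The maxmin-`p` matrix-vector product: `(A ⊗_p x)_i = ⊕_p (j ↦ A i j + x j)`. -/
noncomputable def mmProd {n : ℕ} (p : ℕ) (A : Fin n → Fin n → ℝ) (x : Fin n → ℝ) :
    Fin n → ℝ :=
  fun i => maxmin p (fun j => A i j + x j)

/-- Suppose every maxmin-`p` eigenvector of `A` lies in the zone of `D`, and every row `i`
has an entry `j` with `A i j = L i j = U i j` (where `L i j := ⊕_p(l ↦ A i l + D l j)` and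
`U i j := ⊕_p(l ↦ A i l − D j l)`). Then max-plus and min-plus linear combinations of
eigenvectors associated with `λ` are again eigenvectors associated with `λ`. -/
theorem eigen_combinations (n p : ℕ) (hn : 1 ≤ n) (hp1 : 1 ≤ p) (hpn : p ≤ n)
    (A D : Fin n → Fin n → ℝ)
    (hzone : ∀ z : Fin n → ℝ, (∃ lam' : ℝ, ∀ i, mmProd p A z i = lam' + z i) →
      ∀ i j, z i - z j ≥ D i j)
    (hact : ∀ i : Fin n, ∃ j : Fin n,
      A i j = maxmin p (fun l => A i l + D l j) ∧
      maxmin p (fun l => A i l + D l j) = maxmin p (fun l => A i l - D j l))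
    (x y : Fin n → ℝ) (lam α β : ℝ)
    (hx : ∀ i, mmProd p A x i = lam + x i)
    (hy : ∀ i, mmProd p A y i = lam + y i) :
    (∀ i, mmProd p A (fun j => max (α + x j) (β + y j)) i =
        lam + max (α + x i) (β + y i)) ∧
    (∀ i, mmProd p A (fun j => min (α + x j) (β + y j)) i =
        lam + min (α + x i) (β + y i)) := by
  -- For any vector in the zone of `D`, the product at row `i` is attained exactly
  -- at the active column `j`.
  have key : ∀ z : Fin n → ℝ, (∀ l j, z l - z j ≥ D l j) → ∀ i j : Fin n,
      A i j = maxmin p (fun l => A i l + D l j) →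
      maxmin p (fun l => A i l + D l j) = maxmin p (fun l => A i l - D j l) →
      mmProd p A z i = A i j + z j := by
    intro z hz i j h1 h2
    show maxmin p (fun l => A i l + z l) = A i j + z j
    have hub : maxmin p (fun l => A i l + z l) ≤ A i j + z j := by
      have hm : ∀ l, A i l + z l ≤ (A i l - D j l) + z j := by
        intro l; have := hz j l; linarith
      calc maxmin p (fun l => A i l + z l)
          ≤ maxmin p (fun l => (A i l - D j l) + z j) := maxmin_mono hp1 hpn hm
        _ = maxmin p (fun l => A i l - D j l) + z j := maxmin_add_const hp1 hpn _ _
        _ = A i j + z j := by rw [← h2, ← h1]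
    have hlb : A i j + z j ≤ maxmin p (fun l => A i l + z l) := by
      have hm : ∀ l, (A i l + D l j) + z j ≤ A i l + z l := by
        intro l; have := hz l j; linarith
      calc A i j + z j = maxmin p (fun l => A i l + D l j) + z j := by rw [← h1]
        _ = maxmin p (fun l => (A i l + D l j) + z j) :=
            (maxmin_add_const hp1 hpn _ _).symm
        _ ≤ maxmin p (fun l => A i l + z l) := maxmin_mono hp1 hpn hm
    linarith
  -- translated eigenvectors
  have hx' : ∀ i, mmProd p A (fun j => α + x j) i = lam + (α + x i) := by
    intro i
    show maxmin p (fun j => A i j + (α + x j)) = lam + (α + x i)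
    have e : (fun j => A i j + (α + x j)) = fun j => (A i j + x j) + α := by
      funext j; ring
    rw [e, maxmin_add_const hp1 hpn]
    have hxi := hx i
    show maxmin p (fun j => A i j + x j) + α = lam + (α + x i)
    have : mmProd p A x i = maxmin p (fun j => A i j + x j) := rfl
    rw [this] at hxi
    linarith
  have hy' : ∀ i, mmProd p A (fun j => β + y j) i = lam + (β + y i) := by
    intro i
    show maxmin p (fun j => A i j + (β + y j)) = lam + (β + y i)
    have e : (fun j => A i j + (β + y j)) = fun j => (A i j + y j) + β := by
      funext j; ring
    rw [e, maxmin_add_const hp1 hpn]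
    have hyi := hy i
    have : mmProd p A y i = maxmin p (fun j => A i j + y j) := rfl
    rw [this] at hyi
    show maxmin p (fun j => A i j + y j) + β = lam + (β + y i)
    linarith
  have hzx : ∀ l j, (α + x l) - (α + x j) ≥ D l j :=
    hzone (fun j => α + x j) ⟨lam, hx'⟩
  have hzy : ∀ l j, (β + y l) - (β + y j) ≥ D l j :=
    hzone (fun j => β + y j) ⟨lam, hy'⟩
  -- the zone is closed under pointwise max and min
  have hzw : ∀ l j, max (α + x l) (β + y l) - max (α + x j) (β + y j) ≥ D l j := by
    intro l j
    rcases le_total (α + x j) (β + y j) with hj | hj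
    · have h2 : β + y l ≤ max (α + x l) (β + y l) := le_max_right _ _
      have := hzy l j
      have hm : max (α + x j) (β + y j) = β + y j := max_eq_right hj
      rw [hm]; linarith
    · have h2 : α + x l ≤ max (α + x l) (β + y l) := le_max_left _ _
      have := hzx l j
      have hm : max (α + x j) (β + y j) = α + x j := max_eq_left hj
      rw [hm]; linarith
  have hzv : ∀ l j, min (α + x l) (β + y l) - min (α + x j) (β + y j) ≥ D l j := by
    intro l j
    rcases le_total (α + x l) (β + y l) with hl | hl
    · have h2 : min (α + x j) (β + y j) ≤ α + x j := min_le_left _ _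
      have := hzx l j
      have hm : min (α + x l) (β + y l) = α + x l := min_eq_left hl
      rw [hm]; linarith
    · have h2 : min (α + x j) (β + y j) ≤ β + y j := min_le_right _ _
      have := hzy l j
      have hm : min (α + x l) (β + y l) = β + y l := min_eq_right hl
      rw [hm]; linarith
  constructor
  · intro i
    obtain ⟨j, h1, h2⟩ := hact i
    have hW := key (fun j => max (α + x j) (β + y j)) hzw i j h1 h2
    have hxe : lam + (α + x i) = A i j + (α + x j) := by
      rw [← hx' i, key (fun j => α + x j) hzx i j h1 h2]
    have hye : lam + (β + y i) = A i j + (β + y j) := by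
      rw [← hy' i, key (fun j => β + y j) hzy i j h1 h2]
    rw [hW]
    show A i j + max (α + x j) (β + y j) = lam + max (α + x i) (β + y i)
    rcases le_total (α + x j) (β + y j) with hj | hj
    · have hi' : α + x i ≤ β + y i := by linarith [hxe, hye]
      rw [max_eq_right hj, max_eq_right hi']; linarith
    · have hi' : β + y i ≤ α + x i := by linarith [hxe, hye]
      rw [max_eq_left hj, max_eq_left hi']; linarith
  · intro i
    obtain ⟨j, h1, h2⟩ := hact i
    have hV := key (fun j => min (α + x j) (β + y j)) hzv i j h1 h2
    have hxe : lam + (α + x i) = A i j + (α + x j) := by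
      rw [← hx' i, key (fun j => α + x j) hzx i j h1 h2]
    have hye : lam + (β + y i) = A i j + (β + y j) := by
      rw [← hy' i, key (fun j => β + y j) hzy i j h1 h2]
    rw [hV]
    show A i j + min (α + x j) (β + y j) = lam + min (α + x i) (β + y i)
    rcases le_total (α + x j) (β + y j) with hj | hj
    · have hi' : α + x i ≤ β + y i := by linarith [hxe, hye]
      rw [min_eq_left hj, min_eq_left hi']; linarith
    · have hi' : β + y i ≤ α + x i := by linarith [hxe, hye]
      rw [min_eq_right hj, min_eq_right hi']; linarith
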